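/- Suppose E, x*, δ, M, μ, L satisfy Assumption (A) with index k (1 ≤ k ≤ d). Let x ∈ ℝ^d with r = ‖x − x*‖₂ < δ, let v₁, …, v_k be orthonormal eigenvectors of ∇²E(x) corresponding to its k smallest eigenvalues λ₁ ≤ … ≤ λ_k, let β = 2/(L+μ), and set x⁺ = x − β·(I − 2·Σ_{i=1}^k v_i·v_iᵀ)·∇E(x). Then ‖x⁺ − x*‖₂ ≤ (1 − 2μ/(L+μ))·r + M·r²/(L+μ). -/

import Mathlib

open Matrix Finset Filter

noncomputable section

abbrev EVec (d : ℕ) := EuclideanSpace ℝ (Fin d)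

/-- The operator (spectral) norm of a real matrix, i.e. the norm of the induced
linear map between Euclidean spaces. -/
noncomputable def specNorm {m n : Type*} [Fintype m] [Fintype n] [DecidableEq n]
    (A : Matrix m n ℝ) : ℝ :=
  ‖LinearMap.toContinuousLinearMap (Matrix.toEuclideanLin A)‖

/-- Matrix-vector multiplication on Euclidean space. -/
noncomputable def mulVecE {d : ℕ} (A : Matrix (Fin d) (Fin d) ℝ) (x : EVec d) : EVec d :=
  Matrix.toEuclideanLin A x

/-- Outer product `v · wᵀ` of two vectors. -/
def outer {d : ℕ} (v w : EVec d) : Matrix (Fin d) (Fin d) ℝ :=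
  Matrix.of fun i j => v i * w j

/-- Assumption (A) with index `k` for the energy `E` with Hessian `hess`, saddle point
`xstar`, radius `δ`, Lipschitz constant `M` and eigenvalue bounds `0 < μ < L`:
`E` is twice continuously differentiable, `hess` is the (symmetric) Hessian of `E`,
`∇E(x*) = 0`, the Hessian is `M`-Lipschitz on `U(x*, δ)`, and for every
`x ∈ U(x*, δ)` the eigenvalues `λ₁ ≤ … ≤ λ_d` of `∇²E(x)` satisfy
`λ₁ ≤ … ≤ λ_k < 0 < λ_{k+1} ≤ … ≤ λ_d` and `μ ≤ |λᵢ| ≤ L`. -/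
def AssumptionA {d : ℕ} (k : ℕ) (E : EVec d → ℝ)
    (hess : EVec d → Matrix (Fin d) (Fin d) ℝ)
    (xstar : EVec d) (δ M μ L : ℝ) : Prop :=
  ContDiff ℝ 2 E ∧
  (∀ y, HasFDerivAt (gradient E)
    (LinearMap.toContinuousLinearMap (Matrix.toEuclideanLin (hess y))) y) ∧
  (∀ y, (hess y).IsSymm) ∧
  gradient E xstar = 0 ∧
  0 < δ ∧ 0 < M ∧ 0 < μ ∧ μ < L ∧
  (∀ x y : EVec d, ‖x - xstar‖ < δ → ‖y - xstar‖ < δ →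
    specNorm (hess x - hess y) ≤ M * ‖x - y‖) ∧
  (∀ x : EVec d, ‖x - xstar‖ < δ →
    ∃ (u : Fin d → EVec d) (lam : Fin d → ℝ),
      (∀ i j, (inner ℝ (u i) (u j) : ℝ) = if i = j then 1 else 0) ∧
      (∀ i, mulVecE (hess x) (u i) = lam i • u i) ∧
      Monotone lam ∧
      (∀ i : Fin d, (i : ℕ) < k → lam i < 0) ∧
      (∀ i : Fin d, k ≤ (i : ℕ) → 0 < lam i) ∧
      (∀ i, μ ≤ |lam i| ∧ |lam i| ≤ L))


/-! ### Auxiliary lemmas -/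


lemma mulVecE_outer {d : ℕ} (p q z : EVec d) :
    mulVecE (outer p q) z = (inner ℝ q z : ℝ) • p := by
  ext i
  simp [mulVecE, Matrix.toEuclideanLin_apply, Matrix.mulVec, dotProduct, outer,
    PiLp.inner_apply, RCLike.inner_apply, conj_trivial, Finset.mul_sum, mul_comm, WithLp.equiv]
  congr 1; ext j
  show p i * q j * z j = p i * (q j * z j)
  ring

lemma mulVecE_one {d : ℕ} (z : EVec d) : mulVecE 1 z = z := by
  simp [mulVecE, Matrix.toEuclideanLin_apply]

lemma mulVecE_sub {d : ℕ} (A B : Matrix (Fin d) (Fin d) ℝ) (z : EVec d) :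
    mulVecE (A - B) z = mulVecE A z - mulVecE B z := by
  simp [mulVecE, _root_.map_sub]

lemma mulVecE_smulmat {d : ℕ} (c : ℝ) (A : Matrix (Fin d) (Fin d) ℝ) (z : EVec d) :
    mulVecE (c • A) z = c • mulVecE A z := by
  simp [mulVecE, _root_.map_smul]

lemma mulVecE_summat {d n : ℕ} (A : Fin n → Matrix (Fin d) (Fin d) ℝ) (z : EVec d) :
    mulVecE (∑ i, A i) z = ∑ i, mulVecE (A i) z := by
  simp [mulVecE, _root_.map_sum]

lemma mulVecE_add_vec {d : ℕ} (A : Matrix (Fin d) (Fin d) ℝ) (y z : EVec d) :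
    mulVecE A (y + z) = mulVecE A y + mulVecE A z := by
  simp [mulVecE, _root_.map_add]

lemma mulVecE_sum_vec {d n : ℕ} (A : Matrix (Fin d) (Fin d) ℝ) (f : Fin n → EVec d) :
    mulVecE A (∑ i, f i) = ∑ i, mulVecE A (f i) := by
  simp [mulVecE, _root_.map_sum]

lemma mulVecE_smul_vec {d : ℕ} (A : Matrix (Fin d) (Fin d) ℝ) (c : ℝ) (z : EVec d) :
    mulVecE A (c • z) = c • mulVecE A z := by
  simp [mulVecE, _root_.map_smul]

lemma norm_mulVecE_le {d : ℕ} (A : Matrix (Fin d) (Fin d) ℝ) (z : EVec d) :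
    ‖mulVecE A z‖ ≤ specNorm A * ‖z‖ :=
  ContinuousLinearMap.le_opNorm (LinearMap.toContinuousLinearMap (Matrix.toEuclideanLin A)) z

lemma isSymm_toEuclideanLin {d : ℕ} {A : Matrix (Fin d) (Fin d) ℝ} (hA : A.IsSymm) :
    LinearMap.IsSymmetric (Matrix.toEuclideanLin A) := by
  rw [← Matrix.isHermitian_iff_isSymmetric]
  rwa [Matrix.IsHermitian, Matrix.conjTranspose_eq_transpose_of_trivial]

lemma sum_fin_restrict {M : Type*} [AddCommMonoid M] {d k : ℕ} (hkd : k ≤ d) (f : Fin d → M)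
    (hf : ∀ i : Fin d, k ≤ (i : ℕ) → f i = 0) :
    ∑ i, f i = ∑ i : Fin k, f (Fin.castLE hkd i) := by
  classical
  have h1 : ∑ i ∈ (Finset.univ.map (Fin.castLEEmb hkd)), f i = ∑ i : Fin k, f (Fin.castLE hkd i) := by
    rw [Finset.sum_map]
    rfl
  rw [← h1]
  symm
  apply Finset.sum_subset (Finset.subset_univ _)
  intro i _ hi
  apply hf
  by_contra hik
  push_neg at hik
  exact hi (Finset.mem_map.2 ⟨⟨(i : ℕ), hik⟩, Finset.mem_univ _, by
    simp [Fin.castLEEmb]⟩)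

lemma norm_sum_sq {d n : ℕ} {u : Fin n → EVec d} (hu : Orthonormal ℝ u) (c : Fin n → ℝ) :
    ‖∑ i, c i • u i‖ ^ 2 = ∑ i, c i ^ 2 := by
  rw [← real_inner_self_eq_norm_sq]
  rw [hu.inner_sum c c]
  simp [sq]

lemma le_of_sq_le_sq' {a b : ℝ} (ha : 0 ≤ a) (hb : 0 ≤ b) (h : a ^ 2 ≤ b ^ 2) : a ≤ b := by
  nlinarith

/-- Taylor bound with Lipschitz Hessian. -/
lemma taylor_bound {d : ℕ} (E : EVec d → ℝ)
    (hess : EVec d → Matrix (Fin d) (Fin d) ℝ) (xstar : EVec d) (δ M : ℝ)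
    (hder : ∀ y, HasFDerivAt (gradient E)
      (LinearMap.toContinuousLinearMap (Matrix.toEuclideanLin (hess y))) y)
    (hgrad0 : gradient E xstar = 0)
    (hlip : ∀ x y : EVec d, ‖x - xstar‖ < δ → ‖y - xstar‖ < δ →
      specNorm (hess x - hess y) ≤ M * ‖x - y‖)
    (x : EVec d) (hx : ‖x - xstar‖ < δ) :
    ‖gradient E x - mulVecE (hess x) (x - xstar)‖ ≤ M / 2 * ‖x - xstar‖ ^ 2 := by
  set w := x - xstar with hw
  set r := ‖w‖ with hr
  have hr0 : 0 ≤ r := norm_nonneg _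
  set ψ : ℝ → EVec d := fun t => gradient E (xstar + t • w) - t • mulVecE (hess x) w with hψdef
  have hψ : ∀ t : ℝ, HasDerivAt ψ
      (mulVecE (hess (xstar + t • w)) w - mulVecE (hess x) w) t := by
    intro t
    have hc : HasDerivAt (fun t : ℝ => xstar + t • w) w t := by
      have h := ((hasDerivAt_id' t).smul_const w).const_add xstar
      rwa [one_smul] at h
    have h1 : HasDerivAt (fun t : ℝ => gradient E (xstar + t • w))
        (mulVecE (hess (xstar + t • w)) w) t := by
      have := (hder (xstar + t • w)).comp_hasDerivAt t hc
      exact this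
    have h2 : HasDerivAt (fun t : ℝ => t • mulVecE (hess x) w)
        (mulVecE (hess x) w) t := by
      simpa using (hasDerivAt_id t).smul_const (mulVecE (hess x) w)
    exact h1.sub h2
  set B : ℝ → ℝ := fun t => M * (t - t ^ 2 / 2) * r ^ 2 with hBdef
  have hB : ∀ t : ℝ, HasDerivAt B (M * (1 - t) * r ^ 2) t := by
    intro t
    have h := (((hasDerivAt_id t).sub ((hasDerivAt_pow 2 t).div_const 2)).const_mul M).mul_const
      (r ^ 2)
    refine h.congr_deriv ?_
    ring_nf
  have key : ∀ ⦃t : ℝ⦄, t ∈ Set.Icc (0:ℝ) 1 → ‖ψ t‖ ≤ B t := by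
    refine image_norm_le_of_norm_deriv_right_le_deriv_boundary
      (f' := fun t => mulVecE (hess (xstar + t • w)) w - mulVecE (hess x) w)
      (B' := fun t => M * (1 - t) * r ^ 2)
      ((continuous_iff_continuousAt.2 fun t => (hψ t).continuousAt).continuousOn)
      (fun t _ => (hψ t).hasDerivWithinAt) (by simp [hψdef, hgrad0, hBdef]) hB ?_
    intro t ht
    have h1 : ‖(xstar + t • w) - xstar‖ < δ := by
      have : ‖(xstar + t • w) - xstar‖ = |t| * r := by
        simp [norm_smul, hr]
      rw [this, abs_of_nonneg ht.1]
      calc t * r ≤ 1 * r := by nlinarith [ht.2.le]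
      _ = r := one_mul r
      _ < δ := hx
    have h2 := hlip _ _ h1 hx
    have h3 : ‖(xstar + t • w) - x‖ = (1 - t) * r := by
      have he : (xstar + t • w) - x = -((1 - t) • w) := by
        rw [hw]; module
      rw [he, norm_neg, norm_smul, Real.norm_eq_abs, abs_of_nonneg (by linarith [ht.2.le])]
    calc ‖mulVecE (hess (xstar + t • w)) w - mulVecE (hess x) w‖
        = ‖mulVecE (hess (xstar + t • w) - hess x) w‖ := by rw [mulVecE_sub]
      _ ≤ specNorm (hess (xstar + t • w) - hess x) * ‖w‖ := norm_mulVecE_le _ _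
      _ ≤ (M * ‖(xstar + t • w) - x‖) * r := by
          apply mul_le_mul_of_nonneg_right h2 hr0
      _ = M * (1 - t) * r ^ 2 := by rw [h3]; ring
  have h1 := key (Set.mem_Icc.2 ⟨zero_le_one, le_refl 1⟩)
  have hx1 : xstar + w = x := by rw [hw]; module
  have hψ1 : ψ 1 = gradient E x - mulVecE (hess x) w := by
    simp only [hψdef, one_smul, hx1]
  have hB1 : B 1 = M / 2 * r ^ 2 := by simp only [hBdef]; ring
  rw [hψ1, hB1] at h1
  exact h1


set_option maxHeartbeats 1000000 in
/-- Theorem 5.1 (single-step estimate, exact eigenvectors, index k): under Assumption (A)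
with index `k`, if `r = ‖x - x*‖₂ < δ`, `v₁, …, v_k` are orthonormal eigenvectors of
`∇²E(x)` corresponding to its `k` smallest eigenvalues (the negative ones, sorted),
`β = 2/(L+μ)` and `x⁺ = x - β (I - 2 Σᵢ vᵢ vᵢᵀ) ∇E(x)`, then
`‖x⁺ - x*‖₂ ≤ (1 - 2μ/(L+μ)) r + M r² / (L+μ)`. -/
theorem indexk_exact_single_step {d k : ℕ} (hk : 1 ≤ k) (hkd : k ≤ d)
    (E : EVec d → ℝ)
    (hess : EVec d → Matrix (Fin d) (Fin d) ℝ)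
    (xstar : EVec d) (δ M μ L : ℝ)
    (hA : AssumptionA k E hess xstar δ M μ L)
    (x : EVec d) (hx : ‖x - xstar‖ < δ)
    (v : Fin k → EVec d)
    (hortho : ∀ i j, (inner ℝ (v i) (v j) : ℝ) = if i = j then 1 else 0)
    (lam : Fin k → ℝ) (hmono : Monotone lam)
    (heig : ∀ i, mulVecE (hess x) (v i) = lam i • v i)
    (hneg : ∀ i, lam i < 0)
    (β : ℝ) (hβ : β = 2 / (L + μ))
    (xplus : EVec d)
    (hstep : xplus = x - β • mulVecE
      (1 - (2 : ℝ) • ∑ i, outer (v i) (v i)) (gradient E x)) :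
    ‖xplus - xstar‖ ≤
      (1 - 2 * μ / (L + μ)) * ‖x - xstar‖ + M * ‖x - xstar‖ ^ 2 / (L + μ) := by
  obtain ⟨hC2, hder, hsymm, hgrad0, hδ, hM, hμ, hμL, hlip, hspec⟩ := hA
  obtain ⟨u, lam', hu_ortho, heig', hmono', hlamneg, hlampos, hlam_bd⟩ := hspec x hx
  -- basic positivity
  have hLμ : 0 < L + μ := by linarith
  have hβpos : 0 < β := by rw [hβ]; positivity
  -- orthonormality
  have hu : Orthonormal ℝ u := orthonormal_iff_ite.2 hu_ortho
  have hv : Orthonormal ℝ v := orthonormal_iff_ite.2 hortho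
  have hd0 : 0 < d := lt_of_lt_of_le hk hkd
  haveI : Nonempty (Fin d) := ⟨⟨0, hd0⟩⟩
  -- symmetric Hessian
  have hsym : LinearMap.IsSymmetric (Matrix.toEuclideanLin (hess x)) :=
    isSymm_toEuclideanLin (hsymm x)
  -- orthonormal basis from u
  have hspan : ⊤ ≤ Submodule.span ℝ (Set.range u) := by
    rw [hu.linearIndependent.span_eq_top_of_card_eq_finrank (by simp)]
  set b : OrthonormalBasis (Fin d) ℝ (EVec d) := OrthonormalBasis.mk hu hspan with hbdef
  have hb : ∀ i, b i = u i := fun i => by rw [hbdef, OrthonormalBasis.coe_mk]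
  have hexpand : ∀ z : EVec d, ∑ i, (inner ℝ (u i) z : ℝ) • u i = z := by
    intro z
    have := b.sum_repr' z
    simpa [hb] using this
  -- perpendicularity of v to high eigenvectors
  have hperp : ∀ (j : Fin k) (i : Fin d), k ≤ (i : ℕ) → (inner ℝ (v j) (u i) : ℝ) = 0 := by
    intro j i hik
    have h : (inner ℝ (mulVecE (hess x) (v j)) (u i) : ℝ)
        = inner ℝ (v j) (mulVecE (hess x) (u i)) := hsym (v j) (u i)
    rw [heig j, heig' i, real_inner_smul_left, real_inner_smul_right] at h
    have hz : (lam j - lam' i) * (inner ℝ (v j) (u i) : ℝ) = 0 := by linear_combination h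
    have hne : lam j - lam' i ≠ 0 := by
      have := hneg j
      have := hlampos i hik
      linarith
    exact (mul_eq_zero.1 hz).resolve_left hne
  -- expansion of v in terms of the first k eigenvectors
  set u' : Fin k → EVec d := fun i => u (Fin.castLE hkd i) with hu'def
  have hu' : Orthonormal ℝ u' := hu.comp _ (Fin.castLE_injective hkd)
  set a : Matrix (Fin k) (Fin k) ℝ :=
    Matrix.of (fun j i => (inner ℝ (v j) (u' i) : ℝ)) with hadef
  have hvj : ∀ j, v j = ∑ i : Fin k, a j i • u' i := by
    intro j
    have h1 := hexpand (v j)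
    have h2 : ∑ i, (inner ℝ (u i) (v j) : ℝ) • u i
        = ∑ i : Fin k, (inner ℝ (u' i) (v j) : ℝ) • u' i :=
      sum_fin_restrict hkd _ (fun i hik => by
        rw [real_inner_comm, hperp j i hik, zero_smul])
    rw [← h1, h2]
    apply Finset.sum_congr rfl
    intro i _
    congr 1
    rw [hadef, Matrix.of_apply, real_inner_comm]
  -- a has orthonormal rows
  have haa : a * aᵀ = 1 := by
    ext j j'
    have h1 : (inner ℝ (v j) (v j') : ℝ) = ∑ i : Fin k, a j i * a j' i := by
      nth_rewrite 1 [hvj j, hvj j']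
      rw [hu'.inner_sum]
      simp [hadef]
    rw [Matrix.mul_apply, Matrix.one_apply]
    simp only [Matrix.transpose_apply]
    rw [← h1, hortho j j']
  have haa' : aᵀ * a = 1 := mul_eq_one_comm.1 haa
  have hcoef : ∀ i i' : Fin k, ∑ j, a j i * a j i' = if i = i' then 1 else 0 := by
    intro i i'
    have := congrFun (congrFun haa' i) i'
    simpa [Matrix.mul_apply, Matrix.transpose_apply, Matrix.one_apply] using this
  -- recovery of low eigenvectors from v
  have hrecov : ∀ i : Fin k, ∑ j, a j i • v j = u' i := by
    intro i
    calc ∑ j, a j i • v j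
        = ∑ j, ∑ i' : Fin k, (a j i * a j i') • u' i' := by
          apply Finset.sum_congr rfl
          intro j _
          rw [hvj j, Finset.smul_sum]
          apply Finset.sum_congr rfl
          intro i' _
          rw [smul_smul]
      _ = ∑ i' : Fin k, (∑ j, a j i * a j i') • u' i' := by
          rw [Finset.sum_comm]
          apply Finset.sum_congr rfl
          intro i' _
          rw [Finset.sum_smul]
      _ = u' i := by
          simp_rw [hcoef]
          simp
  -- the reflection matrix action
  set R : Matrix (Fin d) (Fin d) ℝ := 1 - (2 : ℝ) • ∑ i, outer (v i) (v i) with hRdef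
  have hRact : ∀ z : EVec d,
      mulVecE R z = z - (2 : ℝ) • ∑ j, (inner ℝ (v j) z : ℝ) • v j := by
    intro z
    rw [hRdef, mulVecE_sub, mulVecE_one, mulVecE_smulmat, mulVecE_summat]
    congr 2
    apply Finset.sum_congr rfl
    intro j _
    rw [mulVecE_outer]
  set ε : Fin d → ℝ := fun i => if (i : ℕ) < k then (-1 : ℝ) else 1 with hεdef
  have hRu : ∀ i : Fin d, mulVecE R (u i) = ε i • u i := by
    intro i
    rw [hRact]
    by_cases hik : (i : ℕ) < k
    · have hieq : u' ⟨(i : ℕ), hik⟩ = u i := congrArg u (Fin.ext rfl)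
      have hproj : ∑ j, (inner ℝ (v j) (u i) : ℝ) • v j = u i := by
        calc ∑ j, (inner ℝ (v j) (u i) : ℝ) • v j
            = ∑ j, a j ⟨(i : ℕ), hik⟩ • v j := by
              apply Finset.sum_congr rfl
              intro j _
              simp only [hadef, Matrix.of_apply, hieq]
          _ = u' ⟨(i : ℕ), hik⟩ := hrecov _
          _ = u i := hieq
      rw [hproj, hεdef]
      simp only [hik, if_true]
      module
    · have hproj : ∑ j, (inner ℝ (v j) (u i) : ℝ) • v j = 0 := by
        apply Finset.sum_eq_zero
        intro j _
        rw [hperp j i (le_of_not_gt hik), zero_smul]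
      rw [hproj, hεdef]
      simp only [hik, if_false]
      module
  -- epsilon times eigenvalue is the absolute value
  have hεlam : ∀ i, ε i * lam' i = |lam' i| := by
    intro i
    by_cases hik : (i : ℕ) < k
    · rw [hεdef]; simp only [hik, if_true]
      rw [abs_of_neg (hlamneg i hik)]; ring
    · rw [hεdef]; simp only [hik, if_false]
      rw [abs_of_pos (hlampos i (le_of_not_gt hik))]; ring
  -- setup the main vectors
  set w : EVec d := x - xstar with hw
  set r : ℝ := ‖w‖ with hr
  have hr0 : 0 ≤ r := norm_nonneg _
  set g : EVec d := gradient E x with hg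
  set e : EVec d := g - mulVecE (hess x) w with he
  have hebound : ‖e‖ ≤ M / 2 * r ^ 2 :=
    taylor_bound E hess xstar δ M hder hgrad0 hlip x hx
  set c : Fin d → ℝ := fun i => (inner ℝ (u i) w : ℝ) with hcdef
  set ce : Fin d → ℝ := fun i => (inner ℝ (u i) e : ℝ) with hcedef
  have hwsum : w = ∑ i, c i • u i := (hexpand w).symm
  have hesum : e = ∑ i, ce i • u i := (hexpand e).symm
  -- compute mulVecE R (mulVecE (hess x) w)
  have hHw : mulVecE (hess x) w = ∑ i, (c i * lam' i) • u i := by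
    rw [hwsum, mulVecE_sum_vec]
    apply Finset.sum_congr rfl
    intro i _
    rw [mulVecE_smul_vec, heig' i, smul_smul]
  have hRHw : mulVecE R (mulVecE (hess x) w) = ∑ i, (c i * lam' i * ε i) • u i := by
    rw [hHw, mulVecE_sum_vec]
    apply Finset.sum_congr rfl
    intro i _
    rw [mulVecE_smul_vec, hRu i, smul_smul]
  have hRe : mulVecE R e = ∑ i, (ce i * ε i) • u i := by
    rw [hesum, mulVecE_sum_vec]
    apply Finset.sum_congr rfl
    intro i _
    rw [mulVecE_smul_vec, hRu i, smul_smul]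
  -- decompose the step
  have hge : g = mulVecE (hess x) w + e := by rw [he]; abel
  have hQ : mulVecE R g = mulVecE R (mulVecE (hess x) w) + mulVecE R e := by
    rw [← mulVecE_add_vec, ← hge]
  have hsplit : xplus - xstar
      = (w - β • mulVecE R (mulVecE (hess x) w)) - β • mulVecE R e := by
    rw [hstep, hQ, hw]
    module
  -- the contraction part
  set κ : ℝ := 1 - 2 * μ / (L + μ) with hκdef
  have hκ0 : 0 ≤ κ := by
    rw [hκdef]
    rw [sub_nonneg, div_le_one hLμ]
    linarith
  have hTsum : w - β • mulVecE R (mulVecE (hess x) w)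
      = ∑ i, (c i * (1 - β * |lam' i|)) • u i := by
    rw [hRHw, hwsum, Finset.smul_sum, ← Finset.sum_sub_distrib]
    apply Finset.sum_congr rfl
    intro i _
    rw [smul_smul, ← sub_smul, ← hεlam i]
    congr 1
    ring
  have hκbd : ∀ i, abs (1 - β * |lam' i|) ≤ κ := by
    intro i
    obtain ⟨hlb, hub⟩ := hlam_bd i
    have ht : (0:ℝ) < (L + μ)⁻¹ := inv_pos.2 hLμ
    have ht1 : (L + μ) * (L + μ)⁻¹ = 1 := mul_inv_cancel₀ (ne_of_gt hLμ)
    rw [hκdef, hβ, abs_le, div_eq_mul_inv, div_eq_mul_inv]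
    constructor
    · nlinarith [mul_nonneg ht.le (sub_nonneg.2 hub), ht1, mul_nonneg ht.le (sub_nonneg.2 hlb)]
    · nlinarith [mul_nonneg ht.le (sub_nonneg.2 hlb), ht1]
  have hwnorm : ∑ i, c i ^ 2 = r ^ 2 := by
    rw [hr, hwsum, norm_sum_sq hu]
  have hTnorm : ‖w - β • mulVecE R (mulVecE (hess x) w)‖ ≤ κ * r := by
    apply le_of_sq_le_sq' (norm_nonneg _) (by positivity)
    rw [hTsum, norm_sum_sq hu]
    calc ∑ i, (c i * (1 - β * |lam' i|)) ^ 2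
        ≤ ∑ i, κ ^ 2 * c i ^ 2 := by
          apply Finset.sum_le_sum
          intro i _
          have h := hκbd i
          have h2 : (1 - β * |lam' i|) ^ 2 ≤ κ ^ 2 := by
            rw [← sq_abs (1 - β * |lam' i|)]
            apply pow_le_pow_left₀ (abs_nonneg _) h
          nlinarith [sq_nonneg (c i)]
      _ = κ ^ 2 * r ^ 2 := by rw [← Finset.mul_sum, hwnorm]
      _ = (κ * r) ^ 2 := by ring
  have hRenorm : ‖mulVecE R e‖ = ‖e‖ := by
    have h1 : ‖mulVecE R e‖ ^ 2 = ‖e‖ ^ 2 := by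
      rw [hRe, norm_sum_sq hu, hesum, norm_sum_sq hu]
      apply Finset.sum_congr rfl
      intro i _
      rw [hεdef]
      by_cases hik : (i : ℕ) < k <;> simp [hik] <;> ring
    have h2 := congrArg Real.sqrt h1
    rwa [Real.sqrt_sq (norm_nonneg _), Real.sqrt_sq (norm_nonneg _)] at h2
  -- final assembly
  calc ‖xplus - xstar‖
      ≤ ‖w - β • mulVecE R (mulVecE (hess x) w)‖ + ‖β • mulVecE R e‖ := by
        rw [hsplit]; exact norm_sub_le _ _
    _ ≤ κ * r + β * (M / 2 * r ^ 2) := by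
        apply add_le_add hTnorm
        rw [norm_smul, Real.norm_eq_abs, abs_of_pos hβpos, hRenorm]
        exact mul_le_mul_of_nonneg_left hebound hβpos.le
    _ = (1 - 2 * μ / (L + μ)) * r + M * r ^ 2 / (L + μ) := by
        rw [hκdef, hβ]
        field_simp
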